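/- For n ≥ 3, there is a bijection between B(n) (zero-free degree sequences of length n with largest part exactly n-1 and smallest part exactly 1) and D_0(n-2) (degree sequences of length n-2 allowing zero terms); hence |B(n)| = |D_0(n-2)|. -/

import Mathlib

/-- A function `d : Fin n → ℕ` is graphic if it is the degree sequence of a
simple undirected graph on `n` vertices. -/
def Graphic (n : ℕ) (d : Fin n → ℕ) : Prop :=
  ∃ G : SimpleGraph (Fin n), ∀ v, (G.neighborSet v).ncard = d v

/-- Zero-free degree sequences of length `n` (non-increasing, positive, graphic). -/
def D (n : ℕ) : Set (Fin n → ℕ) :=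
  {d | Antitone d ∧ (∀ i, 0 < d i) ∧ Graphic n d}

/-- Degree sequences of length `n` allowing zero terms. -/
def D0 (n : ℕ) : Set (Fin n → ℕ) :=
  {d | Antitone d ∧ Graphic n d}
/-- Zero-free degree sequences of length n with largest part exactly n-1 and
smallest part exactly 1. -/
def B (n : ℕ) : Set (Fin n → ℕ) := {d | d ∈ D n ∧ (∃ i, d i = n - 1) ∧ ∃ i, d i = 1}

namespace BEquivD0Aux

open Set

variable {n : ℕ}

/-- Embedding of `Fin (n-2)` into `Fin n` as the "middle" vertices `1,…,n-2`. -/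
def emb (n : ℕ) (i : Fin (n - 2)) : Fin n := ⟨i.1 + 1, by have := i.2; omega⟩

lemma emb_injective : Function.Injective (emb n) := by
  intro i j h
  have : i.1 + 1 = j.1 + 1 := congrArg Fin.val h
  exact Fin.ext (by omega)

lemma emb_val (i : Fin (n - 2)) : (emb n i).1 = i.1 + 1 := rfl

lemma ncard_compl_singleton (z : Fin n) : ({z}ᶜ : Set (Fin n)).ncard = n - 1 := by
  rw [Set.ncard_eq_toFinset_card']
  simp [Finset.card_compl]

lemma deg_le (G : SimpleGraph (Fin n)) (v : Fin n) : (G.neighborSet v).ncard ≤ n - 1 := by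
  have h : G.neighborSet v ⊆ {v}ᶜ := by
    intro w hw
    simp only [mem_compl_iff, mem_singleton_iff]
    rintro rfl
    exact G.irrefl hw
  have := Set.ncard_le_ncard h (Set.toFinite _)
  rwa [ncard_compl_singleton] at this

/-- Forward map on sequences: drop first and last entries, subtract 1. -/
def Fd (n : ℕ) (d : Fin n → ℕ) (i : Fin (n - 2)) : ℕ := d (emb n i) - 1

/-- Backward map on sequences: prepend `n-1`, append `1`, add 1 to middle entries. -/
def Bd (n : ℕ) (e : Fin (n - 2) → ℕ) (j : Fin n) : ℕ :=
  if h0 : (j : ℕ) = 0 then n - 1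
  else if h1 : (j : ℕ) = n - 1 then 1
  else e ⟨(j : ℕ) - 1, by have := j.2; omega⟩ + 1

lemma Bd_zero (e : Fin (n - 2) → ℕ) (j : Fin n) (h : (j : ℕ) = 0) : Bd n e j = n - 1 := by
  simp [Bd, h]

lemma Bd_last (hn : 3 ≤ n) (e : Fin (n - 2) → ℕ) (j : Fin n) (h : (j : ℕ) = n - 1) :
    Bd n e j = 1 := by
  have h0 : (j : ℕ) ≠ 0 := by omega
  simp only [Bd]
  rw [dif_neg h0, dif_pos h]

lemma Bd_mid (e : Fin (n - 2) → ℕ) (j : Fin n) (h0 : (j : ℕ) ≠ 0) (h1 : (j : ℕ) ≠ n - 1) :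
    Bd n e j = e ⟨(j : ℕ) - 1, by have := j.2; omega⟩ + 1 := by
  simp only [Bd]
  rw [dif_neg h0, dif_neg h1]

lemma Bd_emb (hn : 3 ≤ n) (e : Fin (n - 2) → ℕ) (i : Fin (n - 2)) :
    Bd n e (emb n i) = e i + 1 := by
  have h0 : ((emb n i : Fin n) : ℕ) ≠ 0 := by simp [emb_val]
  have h1 : ((emb n i : Fin n) : ℕ) ≠ n - 1 := by
    have := i.2; simp [emb_val]; omega
  rw [Bd_mid e _ h0 h1]
  have hidx : ∀ hp : ((emb n i : Fin n) : ℕ) - 1 < n - 2,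
      (⟨((emb n i : Fin n) : ℕ) - 1, hp⟩ : Fin (n - 2)) = i :=
    fun hp => Fin.ext (by simp [emb_val])
  rw [hidx]

lemma B_first (hn : 3 ≤ n) (d : Fin n → ℕ) (hd : d ∈ B n) : d ⟨0, by omega⟩ = n - 1 := by
  obtain ⟨⟨hanti, hpos, G, hG⟩, ⟨i0, hi0⟩, _⟩ := hd
  have h1 : d ⟨0, by omega⟩ ≤ n - 1 := by rw [← hG]; exact deg_le G _
  have h2 : (⟨0, by omega⟩ : Fin n) ≤ i0 := by simp [Fin.le_def]
  have := hanti h2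
  omega

lemma B_last (hn : 3 ≤ n) (d : Fin n → ℕ) (hd : d ∈ B n) : d ⟨n - 1, by omega⟩ = 1 := by
  obtain ⟨⟨hanti, hpos, G, hG⟩, _, ⟨i1, hi1⟩⟩ := hd
  have h2 : i1 ≤ (⟨n - 1, by omega⟩ : Fin n) := by
    have := i1.2; simp [Fin.le_def]; omega
  have h3 := hanti h2
  have h4 := hpos ⟨n - 1, by omega⟩
  omega

/-- The graph on `Fin (n-2)` induced on the middle vertices. -/
def delG (n : ℕ) (G : SimpleGraph (Fin n)) : SimpleGraph (Fin (n - 2)) where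
  Adj i j := G.Adj (emb n i) (emb n j)
  symm := ⟨fun _ _ h => h.symm⟩
  loopless := ⟨fun i h => G.irrefl h⟩

/-- The graph on `Fin n` obtained by adding an isolated vertex and then a dominating vertex. -/
def addG (n : ℕ) (G : SimpleGraph (Fin (n - 2))) : SimpleGraph (Fin n) where
  Adj a b := a ≠ b ∧ ((a : ℕ) = 0 ∨ (b : ℕ) = 0 ∨ ∃ i j, emb n i = a ∧ emb n j = b ∧ G.Adj i j)
  symm := by
    refine ⟨?_⟩
    rintro a b ⟨hne, h⟩
    refine ⟨hne.symm, ?_⟩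
    rcases h with h | h | ⟨i, j, hi, hj, hadj⟩
    · exact Or.inr (Or.inl h)
    · exact Or.inl h
    · exact Or.inr (Or.inr ⟨j, i, hj, hi, hadj.symm⟩)
  loopless := ⟨fun a h => h.1 rfl⟩

lemma fwd_mem (hn : 3 ≤ n) {d : Fin n → ℕ} (hd : d ∈ B n) : Fd n d ∈ D0 (n - 2) := by
  obtain ⟨⟨hanti, hpos, G, hG⟩, hmax, hmin⟩ := hd
  constructor
  · intro i j hij
    exact Nat.sub_le_sub_right
      (hanti (by rw [Fin.le_def, emb_val, emb_val]; exact Nat.succ_le_succ hij)) 1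
  · -- Graphic
    set z : Fin n := ⟨0, by omega⟩ with hz
    set L : Fin n := ⟨n - 1, by omega⟩ with hL
    have h0 : d z = n - 1 := B_first hn d ⟨⟨hanti, hpos, G, hG⟩, hmax, hmin⟩
    have hl : d L = 1 := B_last hn d ⟨⟨hanti, hpos, G, hG⟩, hmax, hmin⟩
    have hdomset : G.neighborSet z = {z}ᶜ := by
      refine Set.eq_of_subset_of_ncard_le ?_ ?_ (Set.toFinite _)
      · intro w hw
        simp only [mem_compl_iff, mem_singleton_iff]
        rintro rfl
        exact G.irrefl hw
      · rw [ncard_compl_singleton, hG, h0]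
    have hdom : ∀ w : Fin n, w ≠ z → G.Adj z w := by
      intro w hw
      have : w ∈ G.neighborSet z := by rw [hdomset]; exact hw
      exact this
    have hLset : G.neighborSet L = {z} := by
      have hcard : (G.neighborSet L).ncard = 1 := by rw [hG, hl]
      obtain ⟨a, ha⟩ := Set.ncard_eq_one.mp hcard
      have hzL : z ∈ G.neighborSet L := by
        have : L ≠ z := by simp only [hz, hL, ne_eq, Fin.mk.injEq]; omega
        exact (hdom L this).symm
      rw [ha] at hzL ⊢
      rw [Set.mem_singleton_iff] at hzL
      rw [hzL]
    refine ⟨delG n G, fun i => ?_⟩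
    have key : G.neighborSet (emb n i) = insert z (emb n '' ((delG n G).neighborSet i)) := by
      ext w
      simp only [SimpleGraph.mem_neighborSet, Set.mem_insert_iff, Set.mem_image]
      constructor
      · intro hw
        by_cases hwz : w = z
        · exact Or.inl hwz
        · right
          have hwL : w ≠ L := by
            rintro rfl
            have : emb n i ∈ G.neighborSet L := hw.symm
            rw [hLset, Set.mem_singleton_iff] at this
            have := congrArg Fin.val this
            simp [emb_val, hz] at this
          have hw0 : (w : ℕ) ≠ 0 := fun h => hwz (Fin.ext (by simp [hz, h]))
          have hwn : (w : ℕ) ≠ n - 1 := fun h => hwL (Fin.ext (by simp [hL, h]))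
          have hwlt := w.2
          refine ⟨⟨(w : ℕ) - 1, by omega⟩, ?_, ?_⟩
          · show G.Adj (emb n i) (emb n ⟨(w : ℕ) - 1, by omega⟩)
            have : emb n ⟨(w : ℕ) - 1, by omega⟩ = w := Fin.ext (by simp [emb_val]; omega)
            rwa [this]
          · exact Fin.ext (by simp [emb_val]; omega)
      · rintro (rfl | ⟨j, hj, rfl⟩)
        · have : emb n i ≠ z := fun h => by
            have := congrArg Fin.val h; simp [emb_val, hz] at this
          exact (hdom _ this).symm
        · exact hj
    have himg : (emb n '' ((delG n G).neighborSet i)).ncard = ((delG n G).neighborSet i).ncard :=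
      Set.ncard_image_of_injective _ emb_injective
    have hznot : z ∉ emb n '' ((delG n G).neighborSet i) := by
      rintro ⟨j, _, hj⟩
      have := congrArg Fin.val hj
      simp [emb_val, hz] at this
    have hcomp : d (emb n i) = ((delG n G).neighborSet i).ncard + 1 := by
      rw [← hG, key, Set.ncard_insert_of_notMem hznot (Set.toFinite _), himg]
    have hd1 : 1 ≤ d (emb n i) := hpos _
    simp only [Fd]
    omega

lemma bwd_mem (hn : 3 ≤ n) {e : Fin (n - 2) → ℕ} (he : e ∈ D0 (n - 2)) : Bd n e ∈ B n := by
  obtain ⟨hanti, G, hG⟩ := he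
  have hbound : ∀ i, e i ≤ n - 3 := by
    intro i
    have := deg_le G i
    rw [hG] at this
    omega
  have hub : ∀ j, Bd n e j ≤ n - 1 := by
    intro j
    by_cases h0 : (j : ℕ) = 0
    · rw [Bd_zero e j h0]
    · by_cases h1 : (j : ℕ) = n - 1
      · rw [Bd_last hn e j h1]; omega
      · rw [Bd_mid e j h0 h1]
        have := hbound ⟨(j : ℕ) - 1, by have := j.2; omega⟩
        omega
  have hlb : ∀ j, 1 ≤ Bd n e j := by
    intro j
    by_cases h0 : (j : ℕ) = 0
    · rw [Bd_zero e j h0]; omega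
    · by_cases h1 : (j : ℕ) = n - 1
      · rw [Bd_last hn e j h1]
      · rw [Bd_mid e j h0 h1]; omega
  refine ⟨⟨?_, fun j => hlb j, ?_⟩, ⟨⟨0, by omega⟩, Bd_zero e _ rfl⟩,
    ⟨⟨n - 1, by omega⟩, Bd_last hn e _ rfl⟩⟩
  · -- Antitone
    intro j k hjk
    by_cases hj0 : (j : ℕ) = 0
    · rw [Bd_zero e j hj0]; exact hub k
    · by_cases hk1 : (k : ℕ) = n - 1
      · rw [Bd_last hn e k hk1]; exact hlb j
      · have hjk' : (j : ℕ) ≤ (k : ℕ) := hjk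
        have hk0 : (k : ℕ) ≠ 0 := by omega
        have hj1 : (j : ℕ) ≠ n - 1 := by
          have := k.2; omega
        rw [Bd_mid e j hj0 hj1, Bd_mid e k hk0 hk1]
        have : (⟨(j : ℕ) - 1, by have := j.2; omega⟩ : Fin (n - 2)) ≤
            ⟨(k : ℕ) - 1, by have := k.2; omega⟩ := by
          simp [Fin.le_def]; omega
        have := hanti this
        omega
  · -- Graphic
    set z : Fin n := ⟨0, by omega⟩ with hz
    set L : Fin n := ⟨n - 1, by omega⟩ with hL
    refine ⟨addG n G, fun v => ?_⟩
    by_cases hv0 : (v : ℕ) = 0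
    · have hvz : v = z := Fin.ext hv0
      have hset : (addG n G).neighborSet v = {v}ᶜ := by
        ext b
        simp only [SimpleGraph.mem_neighborSet, mem_compl_iff, mem_singleton_iff]
        constructor
        · rintro ⟨hne, _⟩ rfl; exact hne rfl
        · intro hb
          exact ⟨fun h => hb h.symm, Or.inl hv0⟩
      rw [hset, ncard_compl_singleton, Bd_zero e v hv0]
    · by_cases hv1 : (v : ℕ) = n - 1
      · have hset : (addG n G).neighborSet v = {z} := by
          ext b
          simp only [SimpleGraph.mem_neighborSet, mem_singleton_iff]
          constructor
          · rintro ⟨hne, h | h | ⟨i, j, hi, hj, _⟩⟩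
            · omega
            · exact Fin.ext (by simp [hz, h])
            · exfalso
              have := congrArg Fin.val hi
              have := i.2
              simp [emb_val, hv1] at *
              omega
          · rintro rfl
            refine ⟨?_, Or.inr (Or.inl rfl)⟩
            intro h
            have := congrArg Fin.val h
            simp [hz] at this
            omega
        rw [hset, Set.ncard_singleton, Bd_last hn e v hv1]
      · -- middle vertex
        have hvlt := v.2
        set i : Fin (n - 2) := ⟨(v : ℕ) - 1, by omega⟩ with hi
        have hvemb : v = emb n i := Fin.ext (by simp [emb_val, hi]; omega)
        have hset : (addG n G).neighborSet v = insert z (emb n '' (G.neighborSet i)) := by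
          ext b
          simp only [SimpleGraph.mem_neighborSet, Set.mem_insert_iff, Set.mem_image]
          constructor
          · rintro ⟨hne, h | h | ⟨i', j, hi', hj, hadj⟩⟩
            · omega
            · exact Or.inl (Fin.ext (by simp [hz, h]))
            · right
              have : i' = i := by
                apply emb_injective
                rw [hi', hvemb]
              subst this
              exact ⟨j, hadj, hj⟩
          · rintro (rfl | ⟨j, hj, rfl⟩)
            · refine ⟨?_, Or.inr (Or.inl rfl)⟩
              intro h
              have := congrArg Fin.val h
              simp [hz] at this
              omega
            · refine ⟨?_, Or.inr (Or.inr ⟨i, j, hvemb.symm, rfl, hj⟩)⟩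
              intro h
              rw [hvemb] at h
              exact G.ne_of_adj hj (emb_injective h)
        have hznot : z ∉ emb n '' (G.neighborSet i) := by
          rintro ⟨j, _, hj⟩
          have := congrArg Fin.val hj
          simp [emb_val, hz] at this
        rw [hset, Set.ncard_insert_of_notMem hznot (Set.toFinite _),
          Set.ncard_image_of_injective _ emb_injective, hG, Bd_mid e v hv0 hv1]

lemma left_inv_eq (hn : 3 ≤ n) {d : Fin n → ℕ} (hd : d ∈ B n) : Bd n (Fd n d) = d := by
  funext j
  by_cases h0 : (j : ℕ) = 0
  · rw [Bd_zero _ j h0]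
    have := B_first hn d hd
    rw [show j = (⟨0, by omega⟩ : Fin n) from Fin.ext h0, this]
  · by_cases h1 : (j : ℕ) = n - 1
    · rw [Bd_last hn _ j h1]
      have := B_last hn d hd
      rw [show j = (⟨n - 1, by omega⟩ : Fin n) from Fin.ext h1, this]
    · rw [Bd_mid _ j h0 h1]
      have hjlt := j.2
      have hemb : emb n (⟨(j : ℕ) - 1, by omega⟩ : Fin (n - 2)) = j :=
        Fin.ext (by simp [emb_val]; omega)
      obtain ⟨⟨_, hpos, _⟩, _, _⟩ := hd
      have := hpos j
      simp only [Fd, hemb]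
      omega

lemma right_inv_eq (hn : 3 ≤ n) (e : Fin (n - 2) → ℕ) : Fd n (Bd n e) = e := by
  funext i
  simp only [Fd, Bd_emb hn]
  omega

end BEquivD0Aux

theorem B_equiv_D0 (n : ℕ) (hn : 3 ≤ n) :
    Nonempty (B n ≃ D0 (n - 2)) ∧ (B n).ncard = (D0 (n - 2)).ncard := by
  open BEquivD0Aux in
  have E : B n ≃ D0 (n - 2) :=
    { toFun := fun d => ⟨Fd n d.1, fwd_mem hn d.2⟩
      invFun := fun e => ⟨Bd n e.1, bwd_mem hn e.2⟩
      left_inv := fun d => Subtype.ext (left_inv_eq hn d.2)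
      right_inv := fun e => Subtype.ext (right_inv_eq hn e.1) }
  refine ⟨⟨E⟩, ?_⟩
  rw [← Nat.card_coe_set_eq, ← Nat.card_coe_set_eq]
  exact Nat.card_congr E
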